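/- Let p be a prime with p ≡ 3 (mod 4). Then every codeword c_S of the LQR code C with S ⊆ GF(p) non-empty and S ≠ GF(p) has Hamming weight exactly 2p; i.e., C is a constant-weight code of weight 2p (apart from the zero word). Moreover, the minimum distance of C is at least d_p = 4p − 2·max_{∅≠S⊆GF(p)} |X_S(GF(p))|. -/

import Mathlib

open Finset

/-- `r_S = Σ_{i∈S} x^i`, viewed as an element of `R = GF(2)[x]/(x^p-1)`
(identified with functions `ZMod p → ZMod 2` recording coefficients). -/
def rOf {p : ℕ} (S : Finset (ZMod p)) : ZMod p → ZMod 2 :=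
  fun a => if a ∈ S then 1 else 0

/-- Multiplication in `R = GF(2)[x]/(x^p-1)` (cyclic convolution of coefficients). -/
def conv {p : ℕ} [NeZero p] (f g : ZMod p → ZMod 2) : ZMod p → ZMod 2 :=
  fun a => ∑ b : ZMod p, f b * g (a - b)

/-- Hamming weight of an element of `R`. -/
def wt {p : ℕ} [NeZero p] (f : ZMod p → ZMod 2) : ℕ :=
  (Finset.univ.filter fun a => f a ≠ 0).card

/-- The set `Q` of quadratic residues in `GF(p)ˣ`. -/
def Qset (p : ℕ) [NeZero p] : Finset (ZMod p) :=
  Finset.univ.filter fun a => a ≠ 0 ∧ ∃ b : ZMod p, b ^ 2 = a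

/-- The set `N` of quadratic non-residues in `GF(p)ˣ`. -/
def Nset (p : ℕ) [NeZero p] : Finset (ZMod p) :=
  Finset.univ.filter fun a => a ≠ 0 ∧ ¬∃ b : ZMod p, b ^ 2 = a

/-- The character sum `Σ_{a ∈ GF(p)} χ(f_S(a))` where `f_S(x) = Π_{b∈S}(x-b)` and
`χ` is the Legendre character. -/
def charSum (p : ℕ) [Fact p.Prime] (S : Finset (ZMod p)) : ℤ :=
  ∑ a : ZMod p, quadraticChar (ZMod p) (∏ b ∈ S, (a - b))

/-- `|X_S(GF(p))|`: the number of affine points of `y² = f_S(x)` over `GF(p)`,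
plus `2` points at infinity if `|S|` is even and `1` if `|S|` is odd. -/
noncomputable def Xcard (p : ℕ) (S : Finset (ZMod p)) : ℕ :=
  Nat.card {xy : ZMod p × ZMod p // xy.2 ^ 2 = ∏ b ∈ S, (xy.1 - b)} +
    if Even S.card then 2 else 1

/-- The QQR codeword `(r_N r_S, r_Q r_S)`. -/
def qqr (p : ℕ) [NeZero p] (S : Finset (ZMod p)) :
    (ZMod p → ZMod 2) × (ZMod p → ZMod 2) :=
  (conv (rOf (Nset p)) (rOf S), conv (rOf (Qset p)) (rOf S))

/-- Hamming weight of a length-`2p` vector identified with a pair of elements of `R`. -/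
def wt2 {p : ℕ} [NeZero p] (x : (ZMod p → ZMod 2) × (ZMod p → ZMod 2)) : ℕ :=
  wt x.1 + wt x.2

/-- The LQR codeword `c_S = (r_N r_S, r_Q r_S, r_N r_S*, r_Q r_S*)`. -/
def lqr (p : ℕ) [NeZero p] (S : Finset (ZMod p)) :
    ((ZMod p → ZMod 2) × (ZMod p → ZMod 2)) × ((ZMod p → ZMod 2) × (ZMod p → ZMod 2)) :=
  (qqr p S, qqr p Sᶜ)

/-- Hamming weight of a length-`4p` vector identified with a 4-tuple of elements of `R`. -/
def wt4 {p : ℕ} [NeZero p]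
    (x : ((ZMod p → ZMod 2) × (ZMod p → ZMod 2)) × ((ZMod p → ZMod 2) × (ZMod p → ZMod 2))) : ℕ :=
  wt2 x.1 + wt2 x.2


section Aux
variable (p : ℕ) [Fact p.Prime]

lemma rOf_compl (S : Finset (ZMod p)) (a : ZMod p) : rOf Sᶜ a = rOf S a + 1 := by
  simp only [rOf, Finset.mem_compl]
  by_cases h : a ∈ S <;> simp [h] <;> decide

lemma conv_compl (T S : Finset (ZMod p)) (a : ZMod p) :
    conv (rOf T) (rOf Sᶜ) a = conv (rOf T) (rOf S) a + (T.card : ZMod 2) := by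
  simp only [conv, rOf_compl, mul_add, mul_one, Finset.sum_add_distrib]
  congr 1
  simp [rOf, Finset.sum_ite_mem]

lemma wt_flip (f : ZMod p → ZMod 2) : wt f + wt (fun a => f a + 1) = p := by
  have : ∀ a : ZMod p, (f a + 1 ≠ 0) ↔ ¬ (f a ≠ 0) := by
    intro a; constructor
    · intro h h'
      rcases (by decide : ∀ x : ZMod 2, x = 0 ∨ x = 1) (f a) with h0 | h1
      · exact h' h0
      · exact h (by rw [h1]; decide)
    · intro h
      have h0 : f a = 0 := not_not.mp h
      rw [h0]; decide
  unfold wt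
  rw [Nat.add_comm]
  calc (Finset.univ.filter fun a => (fun a => f a + 1) a ≠ 0).card
        + (Finset.univ.filter fun a => f a ≠ 0).card
      = (Finset.univ.filter fun a => ¬ (f a ≠ 0)).card
        + (Finset.univ.filter fun a => f a ≠ 0).card := by
        congr 1; congr 1; ext a; simpa using (this a)
    _ = Finset.univ.card := by
        rw [Nat.add_comm]; exact Finset.card_filter_add_card_filter_not _
    _ = p := by simp [ZMod.card]

end Aux
section Aux2
variable (p : ℕ) [Fact p.Prime]

lemma mem_Qset_iff {a : ZMod p} : a ∈ Qset p ↔ a ≠ 0 ∧ IsSquare a := by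
  simp only [Qset, Finset.mem_filter, Finset.mem_univ, true_and]
  constructor
  · rintro ⟨h0, b, hb⟩; exact ⟨h0, ⟨b, by rw [← hb, sq]⟩⟩
  · rintro ⟨h0, b, hb⟩; exact ⟨h0, ⟨b, by rw [hb, sq]⟩⟩

lemma mem_Nset_iff {a : ZMod p} : a ∈ Nset p ↔ a ≠ 0 ∧ ¬ IsSquare a := by
  simp only [Nset, Finset.mem_filter, Finset.mem_univ, true_and]
  constructor
  · rintro ⟨h0, h⟩; exact ⟨h0, fun ⟨b, hb⟩ => h ⟨b, by rw [hb, sq]⟩⟩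
  · rintro ⟨h0, h⟩; exact ⟨h0, fun ⟨b, hb⟩ => h ⟨b, by rw [← hb, sq]⟩⟩

lemma quadChar_eq_one_of_mem_Qset {a : ZMod p} (h : a ∈ Qset p) :
    quadraticChar (ZMod p) a = 1 := by
  rcases (mem_Qset_iff p).mp h with ⟨h0, hs⟩
  exact (quadraticChar_one_iff_isSquare h0).mpr hs

lemma quadChar_eq_neg_one_of_mem_Nset {a : ZMod p} (h : a ∈ Nset p) :
    quadraticChar (ZMod p) a = -1 := by
  rcases (mem_Nset_iff p).mp h with ⟨_, hs⟩
  exact quadraticChar_neg_one_iff_not_isSquare.mpr hs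

lemma ringChar_ne_two (hp4 : p % 4 = 3) : ringChar (ZMod p) ≠ 2 := by
  rw [ZMod.ringChar_zmod_n]; omega

lemma zero_not_mem_Qset : (0 : ZMod p) ∉ Qset p := by
  intro h; exact ((mem_Qset_iff p).mp h).1 rfl

lemma zero_not_mem_Nset : (0 : ZMod p) ∉ Nset p := by
  intro h; exact ((mem_Nset_iff p).mp h).1 rfl

lemma quadChar_ite (a : ZMod p) : quadraticChar (ZMod p) a
    = (if a ∈ Qset p then (1 : ℤ) else 0) + (if a ∈ Nset p then -1 else 0) := by
  by_cases h0 : a = 0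
  · subst h0
    simp [zero_not_mem_Qset, zero_not_mem_Nset]
  · by_cases hs : IsSquare a
    · have hq : a ∈ Qset p := (mem_Qset_iff p).mpr ⟨h0, hs⟩
      have hn : a ∉ Nset p := fun h => ((mem_Nset_iff p).mp h).2 hs
      simp [hq, hn, (quadraticChar_one_iff_isSquare h0).mpr hs]
    · have hq : a ∉ Qset p := fun h => hs ((mem_Qset_iff p).mp h).2
      have hn : a ∈ Nset p := (mem_Nset_iff p).mpr ⟨h0, hs⟩
      simp [hq, hn, quadraticChar_neg_one_iff_not_isSquare.mpr hs]

lemma card_Qset_add_card_Nset : (Qset p).card + (Nset p).card = p - 1 := by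
  classical
  have h1 : (Qset p) ∪ (Nset p) = (Finset.univ : Finset (ZMod p)).erase 0 := by
    ext a
    simp only [Finset.mem_union, mem_Qset_iff, mem_Nset_iff, Finset.mem_erase, Finset.mem_univ,
      and_true]
    tauto
  have h2 : Disjoint (Qset p) (Nset p) := by
    rw [Finset.disjoint_left]
    intro a ha hb
    exact ((mem_Nset_iff p).mp hb).2 ((mem_Qset_iff p).mp ha).2
  rw [← Finset.card_union_of_disjoint h2, h1, Finset.card_erase_of_mem (Finset.mem_univ _)]
  simp [ZMod.card]

lemma card_Qset_eq_card_Nset (hp4 : p % 4 = 3) : (Qset p).card = (Nset p).card := by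
  classical
  have h0 : (0 : ℤ) = ∑ a : ZMod p, quadraticChar (ZMod p) a :=
    (quadraticChar_sum_zero (ringChar_ne_two p hp4)).symm
  have h1 : ∑ a : ZMod p, quadraticChar (ZMod p) a
      = ((Qset p).card : ℤ) - ((Nset p).card : ℤ) := by
    rw [Finset.sum_congr rfl (fun a _ => quadChar_ite p a), Finset.sum_add_distrib]
    rw [Finset.sum_ite_mem, Finset.sum_ite_mem, Finset.univ_inter, Finset.univ_inter]
    simp [sub_eq_add_neg]
  have : ((Qset p).card : ℤ) = ((Nset p).card : ℤ) := by omega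
  exact_mod_cast this

lemma card_Nset_odd (hp4 : p % 4 = 3) : (Nset p).card % 2 = 1 := by
  have h1 := card_Qset_add_card_Nset p
  have h2 := card_Qset_eq_card_Nset p hp4
  omega

lemma card_Qset_odd (hp4 : p % 4 = 3) : (Qset p).card % 2 = 1 := by
  have h1 := card_Qset_add_card_Nset p
  have h2 := card_Qset_eq_card_Nset p hp4
  omega

end Aux2
section Aux3
variable (p : ℕ) [Fact p.Prime]

lemma conv_count (T S : Finset (ZMod p)) (a : ZMod p) :
    conv (rOf T) (rOf S) a = ((S.filter fun b => a - b ∈ T).card : ZMod 2) := by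
  classical
  unfold conv rOf
  rw [← Equiv.sum_comp (Equiv.subLeft a) (fun b => (if b ∈ T then (1:ZMod 2) else 0)
      * (if a - b ∈ S then 1 else 0))]
  simp only [Equiv.subLeft_apply, sub_sub_cancel]
  have h1 : ∀ x : ZMod p, (if a - x ∈ T then (1:ZMod 2) else 0) * (if x ∈ S then 1 else 0)
      = if x ∈ S ∧ a - x ∈ T then 1 else 0 := by
    intro x
    by_cases h1 : x ∈ S <;> by_cases h2 : a - x ∈ T <;> simp [h1, h2]
  rw [Finset.sum_congr rfl (fun x _ => h1 x), Finset.sum_boole]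
  congr 2
  ext x
  simp [and_comm]

lemma count_partition (S : Finset (ZMod p)) (a : ZMod p) :
    (S.filter fun b => a - b ∈ Nset p).card + (S.filter fun b => a - b ∈ Qset p).card
      + (if a ∈ S then 1 else 0) = S.card := by
  classical
  have key : ∀ b ∈ S, (a - b ∈ Nset p) ∨ (a - b ∈ Qset p) ∨ b = a := by
    intro b _
    by_cases hb : b = a
    · exact Or.inr (Or.inr hb)
    · have h0 : a - b ≠ 0 := sub_ne_zero.mpr (Ne.symm hb)
      by_cases hs : IsSquare (a - b)
      · exact Or.inr (Or.inl ((mem_Qset_iff p).mpr ⟨h0, hs⟩))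
      · exact Or.inl ((mem_Nset_iff p).mpr ⟨h0, hs⟩)
  have hdisj1 : ∀ b, a - b ∈ Nset p → a - b ∈ Qset p → False := fun b h1 h2 =>
    ((mem_Nset_iff p).mp h1).2 ((mem_Qset_iff p).mp h2).2
  have hNa : ∀ b, b = a → a - b ∈ Nset p → False := by
    intro b hb h; subst hb; simp at h; exact (zero_not_mem_Nset p) h
  have hQa : ∀ b, b = a → a - b ∈ Qset p → False := by
    intro b hb h; subst hb; simp at h; exact (zero_not_mem_Qset p) h
  rw [← Finset.card_filter_add_card_filter_not (s := S)
    (p := fun b => a - b ∈ Nset p), add_assoc]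
  congr 1
  have : S.filter (fun b => ¬ (a - b ∈ Nset p))
      = S.filter (fun b => a - b ∈ Qset p) ∪ S.filter (fun b => b = a) := by
    ext b
    simp only [Finset.mem_filter, Finset.mem_union]
    constructor
    · rintro ⟨hb, hn⟩
      rcases key b hb with h | h | h
      · exact absurd h hn
      · exact Or.inl ⟨hb, h⟩
      · exact Or.inr ⟨hb, h⟩
    · rintro (⟨hb, h⟩ | ⟨hb, h⟩)
      · exact ⟨hb, fun hn => hdisj1 b hn h⟩
      · exact ⟨hb, fun hn => hNa b h hn⟩
  rw [this, Finset.card_union_of_disjoint]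
  · congr 1
    by_cases ha : a ∈ S
    · rw [if_pos ha, Finset.filter_eq']
      simp [ha]
    · rw [if_neg ha, Finset.filter_eq']
      simp [ha]
  · rw [Finset.disjoint_left]
    intro b hb1 hb2
    rw [Finset.mem_filter] at hb1 hb2
    exact hQa b hb2.2 hb1.2

lemma quadChar_prod (S : Finset (ZMod p)) (a : ZMod p) (ha : a ∉ S) :
    quadraticChar (ZMod p) (∏ b ∈ S, (a - b))
      = (-1) ^ (S.filter fun b => a - b ∈ Nset p).card := by
  classical
  rw [map_prod]
  rw [← Finset.prod_filter_mul_prod_filter_not S (fun b => a - b ∈ Nset p)]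
  have h1 : ∏ b ∈ S.filter (fun b => a - b ∈ Nset p), quadraticChar (ZMod p) (a - b)
      = (-1 : ℤ) ^ (S.filter fun b => a - b ∈ Nset p).card := by
    rw [Finset.prod_congr rfl (fun b hb => ?_), Finset.prod_const]
    exact quadChar_eq_neg_one_of_mem_Nset p (Finset.mem_filter.mp hb).2
  have h2 : ∏ b ∈ S.filter (fun b => ¬ (a - b ∈ Nset p)), quadraticChar (ZMod p) (a - b)
      = 1 := by
    apply Finset.prod_eq_one
    intro b hb
    rcases Finset.mem_filter.mp hb with ⟨hbS, hbn⟩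
    have h0 : a - b ≠ 0 := sub_ne_zero.mpr (fun h => ha (h ▸ hbS))
    have hs : IsSquare (a - b) := by
      by_contra hs
      exact hbn ((mem_Nset_iff p).mpr ⟨h0, hs⟩)
    exact (quadraticChar_one_iff_isSquare h0).mpr hs
  rw [h1, h2, mul_one]

lemma quadChar_prod_zero (S : Finset (ZMod p)) (a : ZMod p) (ha : a ∈ S) :
    quadraticChar (ZMod p) (∏ b ∈ S, (a - b)) = 0 := by
  rw [Finset.prod_eq_zero ha (by simp)]
  exact quadraticChar_zero

end Aux3
section Aux4
variable (p : ℕ) [Fact p.Prime]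

lemma wt_eq_sum (f : ZMod p → ZMod 2) :
    (wt f : ℤ) = ∑ a : ZMod p, if f a ≠ 0 then 1 else 0 := by
  unfold wt
  rw [Finset.card_filter]
  push_cast
  rfl

lemma natCast_zmod_two_ne_zero_iff (n : ℕ) : ((n : ZMod 2) ≠ 0) ↔ n % 2 = 1 := by
  rw [Ne, ZMod.natCast_eq_zero_iff]
  omega

lemma pointwise_even (S : Finset (ZMod p)) (hs : S.card % 2 = 0) (a : ZMod p) :
    ((if conv (rOf (Nset p)) (rOf S) a ≠ 0 then (1:ℤ) else 0)
      + (if conv (rOf (Qset p)) (rOf S) a ≠ 0 then 1 else 0))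
    = 1 - quadraticChar (ZMod p) (∏ b ∈ S, (a - b)) := by
  classical
  have hN := conv_count p (Nset p) S a
  have hQ := conv_count p (Qset p) S a
  set n := (S.filter fun b => a - b ∈ Nset p).card with hn
  set q := (S.filter fun b => a - b ∈ Qset p).card with hq
  have hpart := count_partition p S a
  by_cases ha : a ∈ S
  · rw [quadChar_prod_zero p S a ha]
    rw [if_pos ha] at hpart
    have hnq : n % 2 + q % 2 = 1 := by omega
    rcases Nat.mod_two_eq_zero_or_one n with h | h
    · have hq1 : q % 2 = 1 := by omega
      rw [hN, hQ]
      rw [if_neg (by rw [natCast_zmod_two_ne_zero_iff]; omega),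
        if_pos ((natCast_zmod_two_ne_zero_iff q).mpr hq1)]
      ring
    · have hq0 : q % 2 = 0 := by omega
      rw [hN, hQ]
      rw [if_pos ((natCast_zmod_two_ne_zero_iff n).mpr h),
        if_neg (by rw [natCast_zmod_two_ne_zero_iff]; omega)]
      ring
  · rw [quadChar_prod p S a ha, hN, hQ]
    rw [if_neg ha] at hpart
    rcases Nat.mod_two_eq_zero_or_one n with h | h
    · have hq0 : q % 2 = 0 := by omega
      rw [if_neg (by rw [natCast_zmod_two_ne_zero_iff]; omega),
        if_neg (by rw [natCast_zmod_two_ne_zero_iff]; omega)]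
      rw [(Nat.even_iff.mpr h).neg_one_pow]
      ring
    · have hq1 : q % 2 = 1 := by omega
      rw [if_pos ((natCast_zmod_two_ne_zero_iff n).mpr h),
        if_pos ((natCast_zmod_two_ne_zero_iff q).mpr hq1)]
      rw [(Nat.odd_iff.mpr h).neg_one_pow]
      ring

lemma wt2_qqr_even (S : Finset (ZMod p)) (hs : S.card % 2 = 0) :
    (wt2 (qqr p S) : ℤ) = p - charSum p S := by
  unfold wt2 qqr
  push_cast
  rw [wt_eq_sum, wt_eq_sum, ← Finset.sum_add_distrib]
  rw [Finset.sum_congr rfl (fun a _ => pointwise_even p S hs a)]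
  rw [Finset.sum_sub_distrib, Finset.sum_const, Finset.card_univ, ZMod.card]
  unfold charSum
  push_cast
  ring

end Aux4
section Aux5
variable (p : ℕ) [Fact p.Prime]

lemma affine_count (hp4 : p % 4 = 3) (S : Finset (ZMod p)) :
    (Nat.card {xy : ZMod p × ZMod p // xy.2 ^ 2 = ∏ b ∈ S, (xy.1 - b)} : ℤ)
      = p + charSum p S := by
  classical
  rw [Nat.card_eq_fintype_card]
  rw [Fintype.card_congr (Equiv.subtypeProdEquivSigmaSubtype
    (fun x y => y ^ 2 = ∏ b ∈ S, (x - b)))]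
  rw [Fintype.card_sigma]
  have key : ∀ x : ZMod p, (Fintype.card {y : ZMod p // y ^ 2 = ∏ b ∈ S, (x - b)} : ℤ)
      = quadraticChar (ZMod p) (∏ b ∈ S, (x - b)) + 1 := by
    intro x
    rw [← quadraticChar_card_sqrts (ringChar_ne_two p hp4) (∏ b ∈ S, (x - b))]
    rw [Fintype.card_subtype]
    congr 1
    rw [Set.toFinset_setOf]
  push_cast
  rw [Finset.sum_congr rfl (fun x _ => key x)]
  rw [Finset.sum_add_distrib, Finset.sum_const, Finset.card_univ, ZMod.card]
  unfold charSum
  ring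

lemma Xcard_eq (hp4 : p % 4 = 3) (S : Finset (ZMod p)) :
    (Xcard p S : ℤ) = p + charSum p S + (if Even S.card then 2 else 1) := by
  unfold Xcard
  by_cases h : Even S.card
  · rw [if_pos h]
    push_cast
    rw [affine_count p hp4 S, if_pos h]
  · rw [if_neg h]
    push_cast
    rw [affine_count p hp4 S, if_neg h]

end Aux5
section Aux6
variable (p : ℕ) [Fact p.Prime]

lemma Xcard_le_sup (S : Finset (ZMod p)) (hS : S.Nonempty) :
    Xcard p S ≤ sSup {m : ℕ | ∃ S : Finset (ZMod p), S.Nonempty ∧ Xcard p S = m} := by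
  apply le_csSup
  · refine ⟨Nat.card (ZMod p × ZMod p) + 2, ?_⟩
    rintro m ⟨T, -, rfl⟩
    unfold Xcard
    have h1 : Nat.card {xy : ZMod p × ZMod p // xy.2 ^ 2 = ∏ b ∈ T, (xy.1 - b)}
        ≤ Nat.card (ZMod p × ZMod p) := Finite.card_subtype_le _
    have h2 : (if Even T.card then 2 else 1) ≤ 2 := by split <;> omega
    omega
  · exact ⟨S, hS, rfl⟩

lemma charSum_scale (c : ZMod p) (hc : c ≠ 0) (S : Finset (ZMod p)) :
    charSum p (S.image (fun b => c * b))
      = quadraticChar (ZMod p) c ^ S.card * charSum p S := by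
  classical
  have hinj : Set.InjOn (fun b => c * b) S := fun x _ y _ h =>
    mul_left_cancel₀ hc h
  unfold charSum
  rw [Finset.mul_sum]
  rw [← Equiv.sum_comp (Equiv.mulLeft₀ c hc)
    (fun a => quadraticChar (ZMod p) (∏ b ∈ S.image (fun b => c * b), (a - b)))]
  apply Finset.sum_congr rfl
  intro a _
  rw [Finset.prod_image (fun x hx y hy h => hinj hx hy h)]
  simp only [Equiv.mulLeft₀_apply]
  have : ∀ b ∈ S, c * a - c * b = c * (a - b) := by intro b _; ring
  rw [Finset.prod_congr rfl this, Finset.prod_mul_distrib, Finset.prod_const]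
  rw [map_mul, map_pow]

end Aux6
section Aux7
variable (p : ℕ) [Fact p.Prime]

lemma invmap_injOn (t : ZMod p) (S : Finset (ZMod p)) :
    Set.InjOn (fun b => (b - t)⁻¹) (S.erase t) := by
  intro x hx y hy h
  simp only at h
  have hx' : x - t ≠ 0 := sub_ne_zero.mpr (Finset.ne_of_mem_erase hx)
  have hy' : y - t ≠ 0 := sub_ne_zero.mpr (Finset.ne_of_mem_erase hy)
  have := inv_injective h
  exact sub_left_injective this

lemma card_invmap (t : ZMod p) (S : Finset (ZMod p)) :
    ((S.erase t).image (fun b => (b - t)⁻¹)).card = (S.erase t).card :=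
  Finset.card_image_of_injOn (invmap_injOn p t S)

lemma charSum_inversion (S : Finset (ZMod p)) (hs : S.card % 2 = 0) (t : ZMod p)
    (ht : t ∈ S) :
    charSum p S = quadraticChar (ZMod p) (∏ b ∈ S.erase t, (t - b))
      * charSum p ((S.erase t).image (fun b => (b - t)⁻¹)) - 1 := by
  classical
  set Δ := ∏ b ∈ S.erase t, (t - b) with hΔdef
  set S' := (S.erase t).image (fun b => (b - t)⁻¹) with hS'def
  have hΔ : Δ ≠ 0 := by
    rw [hΔdef]
    apply Finset.prod_ne_zero_iff.mpr
    intro b hb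
    exact sub_ne_zero.mpr (Ne.symm (Finset.ne_of_mem_erase hb))
  set χ := quadraticChar (ZMod p) with hχ
  -- pointwise identity
  have key : ∀ u : ZMod p, u ≠ 0 →
      χ (∏ b ∈ S, (t + u⁻¹ - b)) = χ Δ * χ (∏ b' ∈ S', (u - b')) := by
    intro u hu
    have hprod : ∏ b ∈ S, (t + u⁻¹ - b)
        = Δ * (u⁻¹) ^ S.card * ∏ b' ∈ S', (u - b') := by
      rw [← Finset.mul_prod_erase S _ ht]
      have hpt : ∀ b ∈ S.erase t, t + u⁻¹ - b = (t - b) * u⁻¹ * (u - (b - t)⁻¹) := by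
        intro b hb
        have hbt : b - t ≠ 0 := sub_ne_zero.mpr (Finset.ne_of_mem_erase hb)
        field_simp
        ring
      rw [Finset.prod_congr rfl hpt]
      rw [Finset.prod_mul_distrib, Finset.prod_mul_distrib, Finset.prod_const]
      rw [hS'def, Finset.prod_image (fun x hx y hy h => invmap_injOn p t S hx hy h)]
      have hcard : S.card = (S.erase t).card + 1 := by
        rw [Finset.card_erase_of_mem ht]
        have : 0 < S.card := Finset.card_pos.mpr ⟨t, ht⟩
        omega
      rw [hcard, pow_succ]
      ring
    rw [hprod, map_mul, map_mul, map_pow]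
    have hps : χ u⁻¹ ^ S.card = 1 := by
      obtain ⟨k, hk⟩ : ∃ k, S.card = 2 * k := ⟨S.card / 2, by omega⟩
      rw [hk, pow_mul, quadraticChar_sq_one (inv_ne_zero hu), one_pow]
    rw [hps, mul_one]
  -- χ Δ * χ (f_{S'} 0) = 1
  have hzero : χ Δ * χ (∏ b' ∈ S', (0 - b')) = 1 := by
    have h0 : ∏ b' ∈ S', ((0 : ZMod p) - b') = Δ⁻¹ := by
      rw [hS'def, Finset.prod_image (fun x hx y hy h => invmap_injOn p t S hx hy h)]
      rw [hΔdef, ← Finset.prod_inv_distrib]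
      apply Finset.prod_congr rfl
      intro b hb
      rw [zero_sub, ← inv_neg, neg_sub]
    rw [h0, ← map_mul, mul_inv_cancel₀ hΔ, map_one]
  -- main computation
  have hsplit : charSum p S = ∑ a ∈ Finset.univ.erase t, χ (∏ b ∈ S, (a - b)) := by
    unfold charSum
    rw [← Finset.add_sum_erase _ _ (Finset.mem_univ t)]
    rw [quadChar_prod_zero p S t ht, zero_add]
  rw [hsplit]
  have hbij : ∑ a ∈ Finset.univ.erase t, χ (∏ b ∈ S, (a - b))
      = ∑ u ∈ Finset.univ.erase 0, χ (∏ b ∈ S, (t + u⁻¹ - b)) := by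
    apply Finset.sum_nbij' (i := fun a => (a - t)⁻¹) (j := fun u => t + u⁻¹)
    · intro a ha
      simp only [Finset.mem_erase, Finset.mem_univ, and_true]
      exact inv_ne_zero (sub_ne_zero.mpr (Finset.ne_of_mem_erase ha))
    · intro u hu
      simp only [Finset.mem_erase, Finset.mem_univ, and_true]
      have hu0 : u ≠ 0 := Finset.ne_of_mem_erase hu
      intro h
      apply hu0
      have : u⁻¹ = 0 := by linear_combination h - t
      simpa using this
    · intro a ha
      have h0 : a - t ≠ 0 := sub_ne_zero.mpr (Finset.ne_of_mem_erase ha)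
      field_simp
      ring
    · intro u hu
      rw [add_sub_cancel_left, inv_inv]
    · intro a ha
      rw [inv_inv]
      apply congrArg
      apply Finset.prod_congr rfl
      intro b _
      ring
  rw [hbij]
  rw [Finset.sum_congr rfl (fun u hu => key u (Finset.ne_of_mem_erase hu))]
  have hfin : ∑ u ∈ Finset.univ.erase 0, χ Δ * χ (∏ b' ∈ S', (u - b'))
      = χ Δ * (∑ u : ZMod p, χ (∏ b' ∈ S', (u - b'))) - χ Δ * χ (∏ b' ∈ S', ((0:ZMod p) - b')) := by
    rw [← Finset.mul_sum, ← Finset.add_sum_erase _ _ (Finset.mem_univ (0 : ZMod p))]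
    ring
  rw [hfin, hzero]
  rfl

end Aux7
open scoped symmDiff

section Aux8
variable (p : ℕ) [Fact p.Prime]

lemma natCast_zmod_two_eq_one (n : ℕ) (h : n % 2 = 1) : (n : ZMod 2) = 1 := by
  have h2 : ((n % 2 : ℕ) : ZMod 2) = (n : ZMod 2) := ZMod.natCast_mod n 2 ▸ rfl
  rw [← ZMod.natCast_mod, h]
  rfl

lemma wt2_add_wt2_compl (hp4 : p % 4 = 3) (S : Finset (ZMod p)) :
    wt2 (qqr p S) + wt2 (qqr p Sᶜ) = 2 * p := by
  have hN : ∀ a, conv (rOf (Nset p)) (rOf Sᶜ) a = conv (rOf (Nset p)) (rOf S) a + 1 := by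
    intro a
    rw [conv_compl, natCast_zmod_two_eq_one _ (card_Nset_odd p hp4)]
  have hQ : ∀ a, conv (rOf (Qset p)) (rOf Sᶜ) a = conv (rOf (Qset p)) (rOf S) a + 1 := by
    intro a
    rw [conv_compl, natCast_zmod_two_eq_one _ (card_Qset_odd p hp4)]
  unfold wt2 qqr
  simp only
  have e1 : wt (conv (rOf (Nset p)) (rOf Sᶜ))
      = wt (fun a => conv (rOf (Nset p)) (rOf S) a + 1) := by
    congr 1; funext a; exact hN a
  have e2 : wt (conv (rOf (Qset p)) (rOf Sᶜ))
      = wt (fun a => conv (rOf (Qset p)) (rOf S) a + 1) := by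
    congr 1; funext a; exact hQ a
  rw [e1, e2]
  have w1 := wt_flip p (conv (rOf (Nset p)) (rOf S))
  have w2 := wt_flip p (conv (rOf (Qset p)) (rOf S))
  omega

lemma wt4_lqr (hp4 : p % 4 = 3) (S : Finset (ZMod p)) : wt4 (lqr p S) = 2 * p :=
  wt2_add_wt2_compl p hp4 S

lemma rOf_sub (S₁ S₂ : Finset (ZMod p)) (a : ZMod p) :
    rOf S₁ a - rOf S₂ a = rOf (S₁ ∆ S₂) a := by
  unfold rOf
  by_cases h1 : a ∈ S₁ <;> by_cases h2 : a ∈ S₂ <;>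
    simp [h1, h2, Finset.mem_symmDiff] <;> decide

lemma conv_sub (f g h : ZMod p → ZMod 2) (a : ZMod p) :
    conv f g a - conv f h a = conv f (fun x => g x - h x) a := by
  unfold conv
  rw [← Finset.sum_sub_distrib]
  apply Finset.sum_congr rfl
  intro b _
  ring

lemma qqr_sub (S₁ S₂ : Finset (ZMod p)) :
    qqr p S₁ - qqr p S₂ = qqr p (S₁ ∆ S₂) := by
  unfold qqr
  have key : ∀ T : Finset (ZMod p),
      conv (rOf T) (rOf S₁) - conv (rOf T) (rOf S₂) = conv (rOf T) (rOf (S₁ ∆ S₂)) := by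
    intro T
    funext a
    show conv (rOf T) (rOf S₁) a - conv (rOf T) (rOf S₂) a = _
    rw [conv_sub]
    congr 1
    funext x
    exact rOf_sub p S₁ S₂ x
  exact Prod.ext (key (Nset p)) (key (Qset p))

lemma lqr_sub (S₁ S₂ : Finset (ZMod p)) :
    lqr p S₁ - lqr p S₂ = (qqr p (S₁ ∆ S₂), qqr p (S₁ ∆ S₂)) := by
  unfold lqr
  refine Prod.ext (qqr_sub p S₁ S₂) ?_
  show qqr p S₁ᶜ - qqr p S₂ᶜ = _
  rw [qqr_sub p S₁ᶜ S₂ᶜ, compl_symmDiff_compl]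

lemma wt2_qqr_empty : wt2 (qqr p (∅ : Finset (ZMod p))) = 0 := by
  have h : ∀ T : Finset (ZMod p), conv (rOf T) (rOf (∅ : Finset (ZMod p))) = fun _ => 0 := by
    intro T
    funext a
    unfold conv rOf
    simp
  unfold wt2 qqr wt
  simp only [h]
  simp

lemma wt2_qqr_univ (hp4 : p % 4 = 3) : wt2 (qqr p (Finset.univ : Finset (ZMod p))) = 2 * p := by
  have := wt2_add_wt2_compl p hp4 (Finset.univ : Finset (ZMod p))
  rw [Finset.compl_univ, wt2_qqr_empty] at this
  omega

end Aux8

/-- For `p ≡ 3 (mod 4)` the LQR code is a constant-weight code of weight `2p`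
(apart from the zero word), and its minimum distance is at least
`d_p = 4p - 2·max_{∅ ≠ S ⊆ GF(p)} |X_S(GF(p))|`. -/
theorem lqr_constant_weight_and_min_dist (p : ℕ) [Fact p.Prime] (hp4 : p % 4 = 3) :
    (∀ S : Finset (ZMod p), S.Nonempty → S ≠ Finset.univ → wt4 (lqr p S) = 2 * p) ∧
    (∀ S₁ S₂ : Finset (ZMod p), lqr p S₁ ≠ lqr p S₂ →
      4 * (p : ℤ) -
          2 * ((sSup {m : ℕ | ∃ S : Finset (ZMod p), S.Nonempty ∧ Xcard p S = m} : ℕ) : ℤ) ≤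
        (wt4 (lqr p S₁ - lqr p S₂) : ℤ)) := by
  constructor
  · intro S _ _
    exact wt4_lqr p hp4 S
  · intro S₁ S₂ hne
    set M := sSup {m : ℕ | ∃ S : Finset (ZMod p), S.Nonempty ∧ Xcard p S = m} with hM
    set D := S₁ ∆ S₂ with hD
    have hDne : D.Nonempty := by
      rw [Finset.nonempty_iff_ne_empty]
      intro h
      apply hne
      have h12 : S₁ = S₂ := by
        apply symmDiff_eq_bot.mp
        rw [← Finset.bot_eq_empty] at h
        exact h
      rw [h12]
    have hw : wt4 (lqr p S₁ - lqr p S₂) = 2 * wt2 (qqr p D) := by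
      rw [lqr_sub]
      unfold wt4
      show wt2 (qqr p D) + wt2 (qqr p D) = _
      ring
    have hMcast : ∀ S : Finset (ZMod p), S.Nonempty → (Xcard p S : ℤ) ≤ (M : ℤ) := by
      intro S hS
      exact_mod_cast Xcard_le_sup p S hS
    rw [hw]
    rcases Nat.mod_two_eq_zero_or_one D.card with hpar | hpar
    · -- |D| even
      have h1 : (wt2 (qqr p D) : ℤ) = p - charSum p D := wt2_qqr_even p D hpar
      have h2 : (Xcard p D : ℤ) = p + charSum p D + 2 := by
        rw [Xcard_eq p hp4 D, if_pos (Nat.even_iff.mpr hpar)]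
      have h3 := hMcast D hDne
      push_cast
      linarith
    · by_cases hDu : D = Finset.univ
      · have h1 : wt2 (qqr p D) = 2 * p := by rw [hDu]; exact wt2_qqr_univ p hp4
        have h2 : (0 : ℤ) ≤ (M : ℤ) := Int.natCast_nonneg M
        rw [h1]
        push_cast
        linarith
      · -- |D| odd, D ≠ univ
        set E := Dᶜ with hE
        have hEne : E.Nonempty := by
          rw [Finset.nonempty_iff_ne_empty, hE, Ne, Finset.compl_eq_empty_iff]
          exact hDu
        have hfc : Fintype.card (ZMod p) = p := ZMod.card p
        have hcardD : D.card ≤ p := by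
          have := Finset.card_le_univ D
          omega
        have hcardE : E.card = p - D.card := by
          rw [hE, Finset.card_compl]
          omega
        have hp2 : p % 2 = 1 := by omega
        have hEeven : E.card % 2 = 0 := by omega
        -- wt2 (qqr p D) = p + charSum E
        have hcompl := wt2_add_wt2_compl p hp4 E
        have hEc : Eᶜ = D := by rw [hE, compl_compl]
        rw [hEc] at hcompl
        have hwE : (wt2 (qqr p E) : ℤ) = p - charSum p E := wt2_qqr_even p E hEeven
        have hwD : (wt2 (qqr p D) : ℤ) = p + charSum p E := by
          have : (wt2 (qqr p E) : ℤ) + (wt2 (qqr p D) : ℤ) = 2 * p := by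
            exact_mod_cast hcompl
          linarith
        -- construct a witness set with large Xcard
        obtain ⟨t, ht⟩ := hEne
        set Δ := ∏ b ∈ E.erase t, (t - b) with hΔdef
        have hΔ : Δ ≠ 0 := by
          rw [hΔdef]
          apply Finset.prod_ne_zero_iff.mpr
          intro b hb
          exact sub_ne_zero.mpr (Ne.symm (Finset.ne_of_mem_erase hb))
        set S' := (E.erase t).image (fun b => (b - t)⁻¹) with hS'def
        have hcardS' : S'.card = E.card - 1 := by
          rw [hS'def, card_invmap, Finset.card_erase_of_mem ht]
        have hcardEpos : 1 ≤ E.card := Finset.card_pos.mpr ⟨t, ht⟩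
        have hS'odd : S'.card % 2 = 1 := by omega
        have hS'ne : S'.Nonempty := Finset.card_pos.mp (by omega)
        have hinv := charSum_inversion p E hEeven t ht
        have hkey : (p : ℤ) - charSum p E ≤ (M : ℤ) := by
          rcases quadraticChar_dichotomy hΔ with h1 | h1
          · -- χΔ = 1 : use the quadratic twist of S'
            obtain ⟨c, hc⟩ := quadraticChar_exists_neg_one (ringChar_ne_two p hp4)
            have hc0 : c ≠ 0 := by
              intro h
              rw [h, quadraticChar_zero] at hc
              norm_num at hc
            set S'' := S'.image (fun b => c * b) with hS''def
            have hcsS'' : charSum p S'' = - charSum p S' := by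
              rw [hS''def, charSum_scale p c hc0 S', hc,
                (Nat.odd_iff.mpr hS'odd).neg_one_pow]
              ring
            have hcardS'' : S''.card = S'.card :=
              Finset.card_image_of_injOn (fun x _ y _ h => mul_left_cancel₀ hc0 h)
            have hS''ne : S''.Nonempty := hS'ne.image _
            have hcs' : charSum p S' = charSum p E + 1 := by
              rw [h1] at hinv
              linarith
            have hX := Xcard_eq p hp4 S''
            rw [if_neg (by rw [Nat.even_iff, hcardS'']; omega)] at hX
            have := hMcast S'' hS''ne
            rw [hX, hcsS'', hcs'] at this
            linarith
          · -- χΔ = -1 : use S' itself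
            have hcs' : charSum p S' = - charSum p E - 1 := by
              rw [h1] at hinv
              linarith
            have hX := Xcard_eq p hp4 S'
            rw [if_neg (by rw [Nat.even_iff]; omega)] at hX
            have := hMcast S' hS'ne
            rw [hX, hcs'] at this
            linarith
        push_cast
        linarith
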